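/- For every integer k ≥ 2, let H be the join of the complete graph K_{2k−2} and the cycle C_5 (the graph obtained by adding all edges between a copy of K_{2k−2} and a copy of C_5). Then the clique number of H is 2k, the set of even cycle lengths of H is exactly {4, 6, …, 2k+2} (so |L_e(H)| = k and the longest even cycle has length 2k+2 = 2|L_e(H)|+2), and the chromatic number of H is 2k+1 = 2|L_e(H)|+1. -/

import Mathlib

open SimpleGraph

/-- `G` contains a cycle of length `n`. -/
def SimpleGraph.HasCycleLength {V : Type*} (G : SimpleGraph V) (n : ℕ) : Prop :=
  ∃ (v : V) (c : G.Walk v v), c.IsCycle ∧ c.length = n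

/-- `L_o(G)`: the set of odd cycle lengths of `G`. -/
def SimpleGraph.oddCycleLengths {V : Type*} (G : SimpleGraph V) : Set ℕ :=
  {n | Odd n ∧ G.HasCycleLength n}

/-- `L_e(G)`: the set of even cycle lengths of `G`. -/
def SimpleGraph.evenCycleLengths {V : Type*} (G : SimpleGraph V) : Set ℕ :=
  {n | Even n ∧ G.HasCycleLength n}

/-- `G` is 2-connected: at least 3 vertices, and deleting any single vertex
leaves a connected graph. -/
def SimpleGraph.TwoConnected {V : Type*} [Fintype V] (G : SimpleGraph V) : Prop :=
  3 ≤ Fintype.card V ∧ ∀ v : V, (G.induce {v}ᶜ).Connected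

/-- The join of two graphs: disjoint union together with all edges between the two parts. -/
def SimpleGraph.joinGraph {α β : Type*} (G₁ : SimpleGraph α) (G₂ : SimpleGraph β) :
    SimpleGraph (α ⊕ β) where
  Adj x y :=
    match x, y with
    | Sum.inl a, Sum.inl b => G₁.Adj a b
    | Sum.inr a, Sum.inr b => G₂.Adj a b
    | Sum.inl _, Sum.inr _ => True
    | Sum.inr _, Sum.inl _ => True
  symm := by
    constructor
    rintro (a | a) (b | b) h
    · exact G₁.adj_symm h
    · trivial
    · trivial
    · exact G₂.adj_symm h
  loopless := by
    constructor
    rintro (a | a) h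
    · exact G₁.irrefl h
    · exact G₂.irrefl h

namespace MyAux

variable {V : Type*} (G : SimpleGraph V)

/-- Walk along `f (m), f (m-1), ..., f 0`. -/
def chainWalk (f : ℕ → V) : (m : ℕ) → (∀ i < m, G.Adj (f i) (f (i+1))) → G.Walk (f m) (f 0)
  | 0, _ => SimpleGraph.Walk.nil
  | (m+1), h => SimpleGraph.Walk.cons (G.adj_symm (h m (Nat.lt_succ_self m)))
      (chainWalk f m (fun i hi => h i (Nat.lt_succ_of_lt hi)))

lemma chainWalk_length (f : ℕ → V) (m : ℕ) (h : ∀ i < m, G.Adj (f i) (f (i+1))) :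
    (chainWalk G f m h).length = m := by
  induction m with
  | zero => rfl
  | succ m ih => simp [chainWalk, ih]

lemma chainWalk_support (f : ℕ → V) (m : ℕ) (h : ∀ i < m, G.Adj (f i) (f (i+1))) :
    (chainWalk G f m h).support = ((List.range (m+1)).reverse).map f := by
  induction m with
  | zero => rfl
  | succ m ih =>
    rw [List.range_succ]
    simp [chainWalk, ih]

lemma chainWalk_edges (f : ℕ → V) (m : ℕ) (h : ∀ i < m, G.Adj (f i) (f (i+1)))
    (e : Sym2 V) (he : e ∈ (chainWalk G f m h).edges) : ∃ i < m, e = s(f i, f (i+1)) := by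
  induction m with
  | zero => simp [chainWalk] at he
  | succ m ih =>
    simp only [chainWalk, SimpleGraph.Walk.edges_cons, List.mem_cons] at he
    rcases he with he | he
    · exact ⟨m, Nat.lt_succ_self m, by rw [he, Sym2.eq_swap]⟩
    · obtain ⟨i, hi, hei⟩ := ih _ he
      exact ⟨i, Nat.lt_succ_of_lt hi, hei⟩

lemma hasCycleLength_of_fn (n : ℕ) (hn : 3 ≤ n) (f : ℕ → V)
    (hinj : ∀ i j, i < n → j < n → f i = f j → i = j)
    (hadj : ∀ i, i + 1 < n → G.Adj (f i) (f (i+1)))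
    (hcl : G.Adj (f 0) (f (n-1))) :
    G.HasCycleLength n := by
  have h : ∀ i < n - 1, G.Adj (f i) (f (i+1)) := fun i hi => hadj i (by omega)
  refine ⟨f 0, SimpleGraph.Walk.cons hcl (chainWalk G f (n-1) h), ?_, ?_⟩
  · rw [SimpleGraph.Walk.cons_isCycle_iff]
    constructor
    · rw [SimpleGraph.Walk.isPath_def, chainWalk_support]
      apply List.Nodup.map_on
      · intro x hx y hy hxy
        simp only [List.mem_reverse, List.mem_range] at hx hy
        exact hinj x y (by omega) (by omega) hxy
      · exact List.nodup_reverse.mpr List.nodup_range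
    · intro hmem
      obtain ⟨i, hi, hei⟩ := chainWalk_edges G f (n-1) h _ hmem
      rw [Sym2.eq_iff] at hei
      rcases hei with ⟨h1, h2⟩ | ⟨h1, h2⟩
      · have := hinj 0 i (by omega) (by omega) h1
        have := hinj (n-1) (i+1) (by omega) (by omega) h2
        omega
      · have := hinj 0 (i+1) (by omega) (by omega) h1
        omega
  · simp only [SimpleGraph.Walk.length_cons, chainWalk_length]; omega


variable {k : ℕ}

abbrev Hg (k : ℕ) : SimpleGraph (Fin (2 * k - 2) ⊕ Fin 5) :=
  (⊤ : SimpleGraph (Fin (2 * k - 2))).joinGraph (SimpleGraph.cycleGraph 5)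

lemma adj_ll {a b : Fin (2 * k - 2)} : (Hg k).Adj (Sum.inl a) (Sum.inl b) ↔ a ≠ b := Iff.rfl
lemma adj_lr (a : Fin (2 * k - 2)) (v : Fin 5) : (Hg k).Adj (Sum.inl a) (Sum.inr v) := trivial
lemma adj_rl (a : Fin (2 * k - 2)) (v : Fin 5) : (Hg k).Adj (Sum.inr v) (Sum.inl a) := trivial
lemma adj_rr {v w : Fin 5} :
    (Hg k).Adj (Sum.inr v) (Sum.inr w) ↔ (SimpleGraph.cycleGraph 5).Adj v w := Iff.rfl

lemma c5_no_triangle : ∀ a b c : Fin 5, (SimpleGraph.cycleGraph 5).Adj a b →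
    (SimpleGraph.cycleGraph 5).Adj a c → (SimpleGraph.cycleGraph 5).Adj b c → False := by decide

lemma clique_big (hk : 2 ≤ k) :
    (Hg k).IsNClique (2 * k) ((Finset.univ.image Sum.inl) ∪ {Sum.inr 0, Sum.inr 1}) := by
  constructor
  · rintro x hx y hy hxy
    simp only [Finset.coe_union, Finset.coe_image, Finset.coe_univ, Set.image_univ,
      Set.mem_union, Set.mem_range, Finset.coe_insert, Set.mem_insert_iff,
      Finset.coe_singleton, Set.mem_singleton_iff] at hx hy
    rcases hx with ⟨a, rfl⟩ | rfl | rfl <;> rcases hy with ⟨b, rfl⟩ | rfl | rfl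
    · exact adj_ll.mpr (fun h => hxy (by rw [h]))
    all_goals first
      | exact adj_lr _ _
      | exact adj_rl _ _
      | exact (hxy rfl).elim
      | exact adj_rr.mpr (by decide)
  · rw [Finset.card_union_of_disjoint, Finset.card_image_of_injective _ Sum.inl_injective]
    · simp only [Finset.card_univ, Fintype.card_fin]
      rw [Finset.card_insert_of_notMem (by simp), Finset.card_singleton]
      omega
    · simp

lemma clique_small (hk : 2 ≤ k) (t : Finset (Fin (2 * k - 2) ⊕ Fin 5)) (ht : (Hg k).IsClique t) :
    t.card ≤ 2 * k := by
  classical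
  have hsplit : (t.filter (fun x => x.isLeft)).card + (t.filter (fun x => ¬ x.isLeft)).card
      = t.card := Finset.card_filter_add_card_filter_not _
  have h1 : (t.filter (fun x => x.isLeft)).card ≤ 2 * k - 2 := by
    calc (t.filter (fun x => x.isLeft)).card
        ≤ (Finset.univ.image (Sum.inl : Fin (2*k-2) → _)).card := by
          apply Finset.card_le_card
          intro x hx
          simp only [Finset.mem_filter] at hx
          obtain ⟨a, rfl⟩ := Sum.isLeft_iff.mp hx.2
          simp
      _ = 2 * k - 2 := by
          rw [Finset.card_image_of_injective _ Sum.inl_injective]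
          simp
  have h2 : (t.filter (fun x => ¬ x.isLeft)).card ≤ 2 := by
    by_contra h
    push_neg at h
    obtain ⟨x, y, z, hx, hy, hz, hxy, hxz, hyz⟩ := Finset.two_lt_card_iff.mp h
    simp only [Finset.mem_filter, Sum.not_isLeft, Sum.isRight_iff] at hx hy hz
    obtain ⟨a, rfl⟩ := hx.2
    obtain ⟨b, rfl⟩ := hy.2
    obtain ⟨c, rfl⟩ := hz.2
    exact c5_no_triangle a b c (adj_rr.mp (ht hx.1 hy.1 hxy)) (adj_rr.mp (ht hx.1 hz.1 hxz))
      (adj_rr.mp (ht hy.1 hz.1 hyz))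
  omega

def fsmall (k : ℕ) (hm : 0 < 2*k-2) : ℕ → Fin (2*k-2) ⊕ Fin 5
  | 0 => Sum.inr 0
  | 1 => Sum.inr 1
  | (j+2) => Sum.inl ⟨j % (2*k-2), Nat.mod_lt _ hm⟩

lemma hasCycle_small (hk : 2 ≤ k) {n : ℕ} (h4 : 4 ≤ n) (hn : n ≤ 2*k) :
    (Hg k).HasCycleLength n := by
  have hm : 0 < 2*k-2 := by omega
  apply hasCycleLength_of_fn _ n (by omega) (fsmall k hm)
  · intro i j hi hj hf
    rcases i with _|_|i <;> rcases j with _|_|j <;>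
      simp only [fsmall, Sum.inl.injEq, Sum.inr.injEq, Fin.mk.injEq] at hf ⊢ <;>
    first
      | rfl
      | omega
      | exact absurd hf (by decide)
      | simp at hf
      | (rw [Nat.mod_eq_of_lt (by omega), Nat.mod_eq_of_lt (by omega)] at hf; omega)
  · intro i hi
    rcases i with _|_|i <;> simp only [fsmall]
    · exact adj_rr.mpr (by decide)
    · exact adj_rl _ _
    · refine adj_ll.mpr ?_
      simp only [ne_eq, Fin.mk.injEq]
      rw [Nat.mod_eq_of_lt (by omega), Nat.mod_eq_of_lt (by omega)]
      omega
  · obtain ⟨j, hj⟩ : ∃ j, n - 1 = j + 2 := ⟨n-3, by omega⟩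
    rw [hj]
    simp only [fsmall]
    exact adj_rl _ _

def fbig (k : ℕ) (hm : 0 < 2*k-2) : ℕ → Fin (2*k-2) ⊕ Fin 5
  | 0 => Sum.inr 0
  | 1 => Sum.inr 1
  | 2 => Sum.inl ⟨0, hm⟩
  | 3 => Sum.inr 2
  | 4 => Sum.inr 3
  | (j+5) => Sum.inl ⟨(j+1) % (2*k-2), Nat.mod_lt _ hm⟩

lemma hasCycle_big (hk : 2 ≤ k) : (Hg k).HasCycleLength (2*k+2) := by
  have hm : 0 < 2*k-2 := by omega
  apply hasCycleLength_of_fn _ (2*k+2) (by omega) (fbig k hm)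
  · intro i j hi hj hf
    rcases i with _|_|_|_|_|i <;> rcases j with _|_|_|_|_|j <;>
      simp only [fbig, Sum.inl.injEq, Sum.inr.injEq, Fin.mk.injEq] at hf ⊢ <;>
    first
      | rfl
      | omega
      | exact absurd hf (by decide)
      | simp at hf
      | (rw [Nat.mod_eq_of_lt (by omega)] at hf; omega)
      | (rw [Nat.mod_eq_of_lt (by omega), Nat.mod_eq_of_lt (by omega)] at hf; omega)
  · intro i hi
    rcases i with _|_|_|_|_|i <;> simp only [fbig]
    · exact adj_rr.mpr (by decide)
    · exact adj_rl _ _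
    · exact adj_lr _ _
    · exact adj_rr.mpr (by decide)
    · exact adj_rl _ _
    · refine adj_ll.mpr ?_
      simp only [ne_eq, Fin.mk.injEq]
      rw [Nat.mod_eq_of_lt (by omega), Nat.mod_eq_of_lt (by omega)]
      omega
  · obtain ⟨j, hj⟩ : ∃ j, 2*k+2 - 1 = j + 5 := ⟨2*k-4, by omega⟩
    rw [hj]
    simp only [fbig]
    exact adj_rl _ _

lemma cycle_length_le {V : Type*} [Fintype V] {G : SimpleGraph V} {v : V} {c : G.Walk v v}
    (hc : c.IsCycle) : c.length ≤ Fintype.card V := by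
  have h := hc.support_nodup
  have h2 := List.Nodup.length_le_card h
  have h3 : c.support.length = c.length + 1 := SimpleGraph.Walk.length_support c
  have h4 : c.support.tail.length = c.support.length - 1 := List.length_tail
  omega

lemma evenCL (hk : 2 ≤ k) :
    (Hg k).evenCycleLengths = {n | Even n ∧ 4 ≤ n ∧ n ≤ 2*k+2} := by
  ext n
  simp only [SimpleGraph.evenCycleLengths, Set.mem_setOf_eq]
  constructor
  · rintro ⟨he, v, c, hc, rfl⟩
    refine ⟨he, ?_, ?_⟩
    · have h3 := hc.three_le_length
      obtain ⟨r, hr⟩ := he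
      omega
    · have h1 := cycle_length_le hc
      have hcard : Fintype.card (Fin (2*k-2) ⊕ Fin 5) = 2*k+3 := by
        simp only [Fintype.card_sum, Fintype.card_fin]
        omega
      obtain ⟨r, hr⟩ := he
      omega
  · rintro ⟨he, h4, hle⟩
    refine ⟨he, ?_⟩
    rcases le_or_gt n (2*k) with h | h
    · exact hasCycle_small hk h4 h
    · have hn : n = 2*k+2 := by obtain ⟨r, hr⟩ := he; omega
      rw [hn]
      exact hasCycle_big hk

lemma ncard_eq (hk : 2 ≤ k) : {n : ℕ | Even n ∧ 4 ≤ n ∧ n ≤ 2*k+2}.ncard = k := by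
  have hs : {n : ℕ | Even n ∧ 4 ≤ n ∧ n ≤ 2*k+2} = ↑((Finset.Icc 1 k).image (fun i => 2*i+2)) := by
    ext n
    simp only [Set.mem_setOf_eq, Finset.coe_image, Set.mem_image, Finset.mem_coe,
      Finset.mem_Icc]
    constructor
    · rintro ⟨⟨r, hr⟩, h4, hle⟩
      exact ⟨r-1, by omega, by omega⟩
    · rintro ⟨i, ⟨h1, h2⟩, rfl⟩
      exact ⟨⟨i+1, by omega⟩, by omega, by omega⟩
  rw [hs, Set.ncard_coe_finset,
    Finset.card_image_of_injective _ (fun a b h => by dsimp at h; omega : Function.Injective (fun i => 2*i+2)),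
    Nat.card_Icc]
  omega

lemma cliqueNum_eq (hk : 2 ≤ k) : (Hg k).cliqueNum = 2*k := by
  apply le_antisymm
  · exact csSup_le ⟨2*k, _, clique_big hk⟩
      (fun n hn => by obtain ⟨s, hs⟩ := hn; rw [← hs.2]; exact clique_small hk s hs.1)
  · have hbdd : BddAbove {n | ∃ s, (Hg k).IsNClique n s} :=
      ⟨Fintype.card (Fin (2*k-2) ⊕ Fin 5), fun n hn => by
        obtain ⟨s, hs⟩ := hn; rw [← hs.2]; exact Finset.card_le_univ s⟩
    exact le_csSup hbdd ⟨_, clique_big hk⟩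

def c5col : Fin 5 → ℕ := ![0,1,0,1,2]

lemma c5col_lt : ∀ v, c5col v < 3 := by decide

lemma c5col_valid : ∀ v w : Fin 5, (SimpleGraph.cycleGraph 5).Adj v w → c5col v ≠ c5col w := by
  decide

lemma colorable_up (hk : 2 ≤ k) : (Hg k).Colorable (2*k+1) := by
  refine ⟨SimpleGraph.Coloring.mk (fun x => match x with
    | Sum.inl a => Fin.castLE (by omega) a
    | Sum.inr v => ⟨2*k-2 + c5col v, by have := c5col_lt v; omega⟩) ?_⟩
  rintro (a|v) (b|w) hadj
  · exact fun h => (adj_ll.mp hadj) (Fin.castLE_injective _ h)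
  · intro h
    have h1 := congrArg Fin.val h
    simp only [Fin.coe_castLE] at h1
    have ha := a.isLt
    omega
  · intro h
    have h1 := congrArg Fin.val h
    simp only [Fin.coe_castLE] at h1
    have hb := b.isLt
    omega
  · intro h
    have h2 := c5col_valid v w (adj_rr.mp hadj)
    have h1 := congrArg Fin.val h
    simp only [] at h1
    exact h2 (by omega)

lemma not_colorable (hk : 2 ≤ k) : ¬ (Hg k).Colorable (2*k) := by
  rintro ⟨C⟩
  classical
  set A : Finset (Fin (2*k)) := Finset.univ.image (fun i : Fin (2*k-2) => C (Sum.inl i)) with hA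
  have hAcard : A.card = 2*k-2 := by
    rw [hA, Finset.card_image_of_injective, Finset.card_univ, Fintype.card_fin]
    intro a b h
    by_contra hne
    exact C.valid (adj_ll.mpr hne) h
  have hmem : ∀ v : Fin 5, C (Sum.inr v) ∈ Finset.univ \ A := by
    intro v
    simp only [Finset.mem_sdiff, Finset.mem_univ, true_and, hA, Finset.mem_image]
    rintro ⟨i, hi⟩
    exact C.valid (adj_rl i v) hi.symm
  have hBcard : (Finset.univ \ A).card = 2 := by
    rw [Finset.card_sdiff_of_subset (Finset.subset_univ _), Finset.card_univ, Fintype.card_fin, hAcard]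
    omega
  obtain ⟨b0, b1, hne, hB⟩ := Finset.card_eq_two.mp hBcard
  have hv2 : ∀ v : Fin 5, C (Sum.inr v) = b0 ∨ C (Sum.inr v) = b1 := by
    intro v
    have hv := hmem v
    rw [hB] at hv
    simpa using hv
  let c' : (SimpleGraph.cycleGraph 5).Coloring Bool :=
    SimpleGraph.Coloring.mk (fun v => decide (C (Sum.inr v) = b0)) (by
      intro v w hadj h
      have hCne : C (Sum.inr v) ≠ C (Sum.inr w) := C.valid (adj_rr.mpr hadj)
      rcases hv2 v with hv | hv <;> rcases hv2 w with hw | hw <;> simp_all)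
  let p : (SimpleGraph.cycleGraph 5).Walk 0 0 :=
    .cons (show (SimpleGraph.cycleGraph 5).Adj 0 1 by decide)
    (.cons (show (SimpleGraph.cycleGraph 5).Adj 1 2 by decide)
    (.cons (show (SimpleGraph.cycleGraph 5).Adj 2 3 by decide)
    (.cons (show (SimpleGraph.cycleGraph 5).Adj 3 4 by decide)
    (.cons (show (SimpleGraph.cycleGraph 5).Adj 4 0 by decide) .nil))))
  have hlen : p.length = 5 := rfl
  have hcontra := (c'.odd_length_iff_not_congr p).mp (by rw [hlen]; decide)
  tauto

lemma chrom_eq (hk : 2 ≤ k) : (Hg k).chromaticNumber = ((2*k+1 : ℕ) : ℕ∞) := by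
  apply le_antisymm
  · exact (colorable_up hk).chromaticNumber_le
  · by_contra h
    push_neg at h
    rw [Nat.cast_add, Nat.cast_one] at h
    have h2 : (Hg k).chromaticNumber ≤ ((2*k : ℕ) : ℕ∞) := Order.le_of_lt_add_one h
    exact not_colorable hk (SimpleGraph.chromaticNumber_le_iff_colorable.mp h2)

end MyAux

/-- For `k ≥ 2`, the join `H` of `K_{2k-2}` and `C_5` satisfies
`w(H) = 2k`, `L_e(H) = {4, 6, …, 2k+2}` (so `|L_e(H)| = k`), and `χ(H) = 2k+1`. -/
theorem join_complete_cycle5_even (k : ℕ) (hk : 2 ≤ k) :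
    let H := (⊤ : SimpleGraph (Fin (2 * k - 2))).joinGraph (SimpleGraph.cycleGraph 5)
    H.cliqueNum = 2 * k ∧
      H.evenCycleLengths = {n | Even n ∧ 4 ≤ n ∧ n ≤ 2 * k + 2} ∧
      (H.evenCycleLengths).ncard = k ∧
      H.chromaticNumber = ((2 * k + 1 : ℕ) : ℕ∞) := by
  intro H
  refine ⟨MyAux.cliqueNum_eq hk, MyAux.evenCL hk, ?_, MyAux.chrom_eq hk⟩
  rw [MyAux.evenCL hk]
  exact MyAux.ncard_eq hk
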